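/- Let f_β(b₁, b₂, b₁₂) = Prob_β(b₁, b₂, b₁₂) - β·(3 - b₁ - b₂ - b₁₂)/4, where Prob_β(b₁, b₂, b₁₂) = 1 - Φ_{ρ(b₁,b₂,b₁₂)}(Φ⁻¹((1+βb₁)/2), Φ⁻¹((1+βb₂)/2)) and ρ(b₁,b₂,b₁₂) = (b₁₂ - b₁b₂)/√((1-b₁²)(1-b₂²)). Then for every β ∈ [-1, 1] and every b₁, b₂ ∈ (-1, 1), b₁₂ with ρ(b₁,b₂,b₁₂) ∈ (-1, 1), one has f_β(b₁, b₂, b₁₂) = f_β(-b₁, -b₂, b₁₂). -/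

import Mathlib

noncomputable def phi (x : ℝ) : ℝ := (1 / Real.sqrt (2 * Real.pi)) * Real.exp (-x ^ 2 / 2)

noncomputable def Phi (x : ℝ) : ℝ := ∫ t in Set.Iic x, phi t

noncomputable def phiRho (ρ x y : ℝ) : ℝ :=
  (1 / (2 * Real.pi * Real.sqrt (1 - ρ ^ 2))) *
    Real.exp (-(x ^ 2 - 2 * ρ * x * y + y ^ 2) / (2 * (1 - ρ ^ 2)))

noncomputable def PhiRho (ρ x y : ℝ) : ℝ :=
  ∫ s in Set.Iic x, ∫ t in Set.Iic y, phiRho ρ s t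

noncomputable def PhiInv : ℝ → ℝ := Function.invFun Phi

noncomputable def rho2 (b₁ b₂ b₁₂ : ℝ) : ℝ :=
  (b₁₂ - b₁ * b₂) / Real.sqrt ((1 - b₁ ^ 2) * (1 - b₂ ^ 2))

noncomputable def Prob6 (β b₁ b₂ b₁₂ : ℝ) : ℝ :=
  1 - PhiRho (rho2 b₁ b₂ b₁₂) (PhiInv ((1 + β * b₁) / 2)) (PhiInv ((1 + β * b₂) / 2))

noncomputable def fBeta (β b₁ b₂ b₁₂ : ℝ) : ℝ :=
  Prob6 β b₁ b₂ b₁₂ - β * (3 - b₁ - b₂ - b₁₂) / 4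

open MeasureTheory Real Set Filter ProbabilityTheory Topology

lemma phi_eq_gaussian : phi = gaussianPDFReal 0 1 := by
  funext x
  simp [phi, gaussianPDFReal, one_div]

lemma integrable_phi : Integrable phi := by
  rw [phi_eq_gaussian]; exact integrable_gaussianPDFReal 0 1

lemma integral_phi : ∫ x, phi x = 1 := by
  rw [phi_eq_gaussian]; exact integral_gaussianPDFReal_eq_one 0 one_ne_zero

lemma phi_pos (x : ℝ) : 0 < phi x := by
  have h : 0 < Real.sqrt (2 * Real.pi) := Real.sqrt_pos.2 (by positivity)
  unfold phi
  positivity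

lemma Phi_add_Ioi (x : ℝ) : Phi x + ∫ t in Set.Ioi x, phi t = 1 := by
  rw [Phi, intervalIntegral.integral_Iic_add_Ioi integrable_phi.integrableOn integrable_phi.integrableOn,
    integral_phi]

lemma phi_even (x : ℝ) : phi (-x) = phi x := by simp [phi]

lemma Phi_neg (x : ℝ) : Phi (-x) = 1 - Phi x := by
  have h : Phi x = ∫ t in Ioi (-x), phi t := by
    rw [Phi, ← integral_comp_neg_Iic x phi]
    exact setIntegral_congr_fun measurableSet_Iic fun t _ => (phi_even t).symm
  have h2 := Phi_add_Ioi (-x)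
  linarith

lemma Phi_strictMono : StrictMono Phi := by
  intro a b hab
  have key : Phi b - Phi a = ∫ t in a..b, phi t :=
    intervalIntegral.integral_Iic_sub_Iic integrable_phi.integrableOn integrable_phi.integrableOn
  have pos : 0 < ∫ t in a..b, phi t :=
    intervalIntegral.intervalIntegral_pos_of_pos integrable_phi.intervalIntegrable phi_pos hab
  have : Phi a < Phi b := by linarith
  exact this

lemma continuous_Phi : Continuous Phi := by
  have h := integrable_phi.continuous_primitive 0
  have he : Phi = fun b => Phi 0 + ∫ x in (0:ℝ)..b, phi x := by
    funext b
    have := intervalIntegral.integral_Iic_sub_Iic (a := 0) (b := b)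
      integrable_phi.integrableOn integrable_phi.integrableOn
    rw [Phi, Phi]
    linarith
  rw [he]
  exact continuous_const.add h

lemma tendsto_Phi_atTop : Tendsto Phi atTop (𝓝 1) := by
  have hc : AECover (volume : Measure ℝ) atTop (fun x : ℝ => Iic x) := aecover_Iic tendsto_id
  have h := hc.integral_tendsto_of_countably_generated integrable_phi
  rwa [integral_phi] at h

lemma tendsto_Phi_atBot : Tendsto Phi atBot (𝓝 0) := by
  have hc : AECover (volume : Measure ℝ) atBot (fun x : ℝ => Ioi x) := aecover_Ioi tendsto_id
  have h := hc.integral_tendsto_of_countably_generated integrable_phi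
  rw [integral_phi] at h
  have he : Phi = fun x => 1 - ∫ t in Ioi x, phi t := by
    funext x; linarith [Phi_add_Ioi x]
  rw [he]
  have := (tendsto_const_nhds (x := (1:ℝ)) (f := atBot)).sub h
  simpa using this

lemma Phi_surj {p : ℝ} (hp0 : 0 < p) (hp1 : p < 1) : ∃ x, Phi x = p := by
  obtain ⟨b, hb⟩ := (tendsto_Phi_atTop.eventually (eventually_gt_nhds hp1)).exists
  obtain ⟨a, ha⟩ := (tendsto_Phi_atBot.eventually (eventually_lt_nhds hp0)).exists
  have hab : a ≤ b := le_of_lt (Phi_strictMono.lt_iff_lt.1 (ha.trans hb))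
  obtain ⟨x, _, hx⟩ := intermediate_value_Icc hab continuous_Phi.continuousOn
    ⟨le_of_lt ha, le_of_lt hb⟩
  exact ⟨x, hx⟩

lemma Phi_PhiInv {p : ℝ} (hp0 : 0 < p) (hp1 : p < 1) : Phi (PhiInv p) = p :=
  Function.invFun_eq (Phi_surj hp0 hp1)

lemma PhiInv_one_sub {p : ℝ} (hp0 : 0 < p) (hp1 : p < 1) :
    PhiInv (1 - p) = - PhiInv p := by
  have h : Phi (-PhiInv p) = 1 - p := by rw [Phi_neg, Phi_PhiInv hp0 hp1]
  calc PhiInv (1 - p) = PhiInv (Phi (-PhiInv p)) := by rw [h]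
    _ = -PhiInv p := Function.leftInverse_invFun Phi_strictMono.injective _

section Rho

variable {ρ : ℝ} (hρ : ρ ^ 2 < 1)

lemma phiRho_symm (s t : ℝ) : phiRho ρ s t = phiRho ρ t s := by
  unfold phiRho; ring_nf

lemma phiRho_neg_neg (s t : ℝ) : phiRho ρ (-s) (-t) = phiRho ρ s t := by
  unfold phiRho; ring_nf

include hρ

lemma phiRho_factor (s t : ℝ) :
    phiRho ρ s t = phi s * gaussianPDFReal (ρ * s) ⟨1 - ρ ^ 2, by linarith⟩ t := by
  have h1 : (0:ℝ) < 1 - ρ ^ 2 := by linarith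
  have hπ : (0:ℝ) < 2 * Real.pi := by positivity
  have hsq : Real.sqrt (2 * Real.pi * (1 - ρ ^ 2)) =
      Real.sqrt (2 * Real.pi) * Real.sqrt (1 - ρ ^ 2) := Real.sqrt_mul (le_of_lt hπ) _
  have hss : Real.sqrt (2 * Real.pi) * Real.sqrt (2 * Real.pi) = 2 * Real.pi :=
    Real.mul_self_sqrt (le_of_lt hπ)
  have hsp : 0 < Real.sqrt (2 * Real.pi) := Real.sqrt_pos.2 hπ
  have hsp2 : 0 < Real.sqrt (1 - ρ ^ 2) := Real.sqrt_pos.2 h1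
  unfold phiRho phi gaussianPDFReal
  change 1 / (2 * Real.pi * Real.sqrt (1 - ρ ^ 2)) * Real.exp (-(s ^ 2 - 2 * ρ * s * t + t ^ 2) / (2 * (1 - ρ ^ 2))) =
    1 / Real.sqrt (2 * Real.pi) * Real.exp (-s ^ 2 / 2) *
      ((Real.sqrt (2 * Real.pi * (1 - ρ ^ 2)))⁻¹ * Real.exp (-(t - ρ * s) ^ 2 / (2 * (1 - ρ ^ 2))))
  have hexp : -(s ^ 2 - 2 * ρ * s * t + t ^ 2) / (2 * (1 - ρ ^ 2)) =
      -s ^ 2 / 2 + -(t - ρ * s) ^ 2 / (2 * (1 - ρ ^ 2)) := by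
    field_simp
    ring
  have hpre : 1 / (2 * Real.pi * Real.sqrt (1 - ρ ^ 2)) =
      (1 / Real.sqrt (2 * Real.pi)) * (Real.sqrt (2 * Real.pi * (1 - ρ ^ 2)))⁻¹ := by
    rw [hsq, one_div, one_div, ← mul_inv, ← mul_assoc, hss]
  rw [hexp, Real.exp_add, hpre]
  ring

lemma integrable_phiRho_right (s : ℝ) : Integrable (fun t => phiRho ρ s t) := by
  simp_rw [phiRho_factor hρ s]
  exact (integrable_gaussianPDFReal _ _).const_mul _

lemma integral_phiRho_right (s : ℝ) : ∫ t, phiRho ρ s t = phi s := by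
  simp_rw [phiRho_factor hρ s]
  rw [integral_const_mul]
  convert mul_one (phi s)
  exact integral_gaussianPDFReal_eq_one _ (by
    intro h
    have := congrArg NNReal.toReal h
    simp only [NNReal.coe_mk, NNReal.coe_zero] at this
    change 1 - ρ ^ 2 = 0 at this
    linarith)

lemma integrable_phiRho_prod :
    Integrable (fun p : ℝ × ℝ => phiRho ρ p.1 p.2) ((volume : Measure ℝ).prod volume) := by
  have h1 : (0:ℝ) < 1 - ρ ^ 2 := by linarith
  have hρ1 : |ρ| < 1 := by
    rw [abs_lt]; constructor <;> nlinarith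
  set c : ℝ := (1 - |ρ|) / (2 * (1 - ρ ^ 2)) with hc
  have hcpos : 0 < c := div_pos (by linarith) (by linarith)
  have hK : (0:ℝ) < 1 / (2 * Real.pi * Real.sqrt (1 - ρ ^ 2)) := by
    have := Real.sqrt_pos.2 h1
    positivity
  have hg : Integrable (fun p : ℝ × ℝ =>
      (1 / (2 * Real.pi * Real.sqrt (1 - ρ ^ 2)) * Real.exp (-c * p.1 ^ 2)) *
        Real.exp (-c * p.2 ^ 2)) ((volume : Measure ℝ).prod volume) :=
    ((integrable_exp_neg_mul_sq hcpos).const_mul _).mul_prod (integrable_exp_neg_mul_sq hcpos)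
  refine hg.mono ?_ (ae_of_all _ fun p => ?_)
  · apply Continuous.aestronglyMeasurable
    unfold phiRho
    fun_prop
  · set s := p.1
    set t := p.2
    have hnn : 0 ≤ phiRho ρ s t := by
      unfold phiRho
      positivity
    rw [Real.norm_eq_abs, Real.norm_eq_abs, abs_of_nonneg hnn, abs_of_nonneg (by positivity)]
    unfold phiRho
    have h2 : 2 * ρ * s * t ≤ |ρ| * (s ^ 2 + t ^ 2) := by
      nlinarith [le_abs_self ρ, neg_abs_le ρ, sq_nonneg (s - t), sq_nonneg (s + t)]
    have hE : -(s ^ 2 - 2 * ρ * s * t + t ^ 2) / (2 * (1 - ρ ^ 2)) ≤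
        -c * s ^ 2 + -c * t ^ 2 := by
      have heq : -c * s ^ 2 + -c * t ^ 2 =
          (-((1 - |ρ|) * (s ^ 2 + t ^ 2))) / (2 * (1 - ρ ^ 2)) := by
        rw [hc]; field_simp; ring
      rw [heq, div_le_div_iff_of_pos_right (by linarith)]
      nlinarith
    calc 1 / (2 * Real.pi * Real.sqrt (1 - ρ ^ 2)) *
          Real.exp (-(s ^ 2 - 2 * ρ * s * t + t ^ 2) / (2 * (1 - ρ ^ 2)))
        ≤ 1 / (2 * Real.pi * Real.sqrt (1 - ρ ^ 2)) *
          Real.exp (-c * s ^ 2 + -c * t ^ 2) := by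
          exact mul_le_mul_of_nonneg_left (Real.exp_le_exp.2 hE) (le_of_lt hK)
      _ = 1 / (2 * Real.pi * Real.sqrt (1 - ρ ^ 2)) * Real.exp (-c * s ^ 2) *
          Real.exp (-c * t ^ 2) := by rw [Real.exp_add]; ring

lemma PhiRho_key (x y : ℝ) :
    PhiRho ρ x y - PhiRho ρ (-x) (-y) = Phi x + Phi y - 1 := by
  have hprod := integrable_phiRho_prod hρ
  set Fgt : ℝ → ℝ := fun s => ∫ t in Ioi y, phiRho ρ s t with hFgt
  have hJ : Integrable (fun p : ℝ × ℝ => (Ioi y).indicator (fun t => phiRho ρ p.1 t) p.2)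
      ((volume : Measure ℝ).prod volume) := by
    have he : (fun p : ℝ × ℝ => (Ioi y).indicator (fun t => phiRho ρ p.1 t) p.2)
        = (univ ×ˢ Ioi y).indicator (fun p : ℝ × ℝ => phiRho ρ p.1 p.2) := by
      funext p
      by_cases h : p.2 ∈ Ioi y
      · simp [indicator_of_mem, h, Set.mem_prod]
      · simp [indicator_of_notMem, h, Set.mem_prod]
    rw [he]
    exact hprod.indicator (MeasurableSet.univ.prod measurableSet_Ioi)
  have hFgt_int : Integrable Fgt := by
    have h := hJ.integral_prod_left
    have he : (fun s => ∫ t, (Ioi y).indicator (fun t => phiRho ρ s t) t) = Fgt := by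
      funext s
      rw [hFgt, integral_indicator measurableSet_Ioi]
    rwa [he] at h
  have hswap : ∫ s, Fgt s = ∫ t in Ioi y, phi t := by
    have h1 : ∫ s, Fgt s = ∫ s, ∫ t, (Ioi y).indicator (fun t => phiRho ρ s t) t := by
      refine integral_congr_ae (ae_of_all _ fun s => ?_)
      show (∫ t in Ioi y, phiRho ρ s t) = ∫ t, (Ioi y).indicator (fun t => phiRho ρ s t) t
      rw [integral_indicator measurableSet_Ioi]
    rw [h1, integral_integral_swap hJ]
    have h2 : ∀ t : ℝ, (∫ s, (Ioi y).indicator (fun t => phiRho ρ s t) t)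
        = (Ioi y).indicator (fun t => ∫ s, phiRho ρ s t) t := by
      intro t
      by_cases h : t ∈ Ioi y <;> simp [h]
    simp_rw [h2]
    rw [integral_indicator measurableSet_Ioi]
    refine setIntegral_congr_fun measurableSet_Ioi fun t _ => ?_
    simp_rw [phiRho_symm (ρ := ρ)]
    exact integral_phiRho_right hρ t
  have hIoiy : ∫ t in Ioi y, phi t = 1 - Phi y := by linarith [Phi_add_Ioi y]
  have hstep1 : PhiRho ρ (-x) (-y) = ∫ s in Ioi x, Fgt s := by
    rw [PhiRho]
    have e1 : ∀ s : ℝ, (∫ t in Iic (-y), phiRho ρ s t) = ∫ t in Ioi y, phiRho ρ s (-t) :=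
      fun s => (integral_comp_neg_Ioi y (fun t => phiRho ρ s t)).symm
    have e2 : (∫ s in Iic (-x), ∫ t in Iic (-y), phiRho ρ s t)
        = ∫ s in Iic (-x), ∫ t in Ioi y, phiRho ρ s (-t) :=
      setIntegral_congr_fun measurableSet_Iic fun s _ => e1 s
    have e3 := (integral_comp_neg_Ioi x (fun s => ∫ t in Ioi y, phiRho ρ s (-t))).symm
    rw [e2, e3]
    refine setIntegral_congr_fun measurableSet_Ioi fun s _ => ?_
    simp only [phiRho_neg_neg, hFgt]
  have hsplit : ∀ s : ℝ, (∫ t in Iic y, phiRho ρ s t) = phi s - Fgt s := by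
    intro s
    have h := intervalIntegral.integral_Iic_add_Ioi (b := y) (integrable_phiRho_right hρ s).integrableOn
      (integrable_phiRho_right hρ s).integrableOn
    rw [integral_phiRho_right hρ s] at h
    rw [hFgt]
    linarith
  have hsum := intervalIntegral.integral_Iic_add_Ioi (b := x) hFgt_int.integrableOn hFgt_int.integrableOn
  rw [hswap, hIoiy] at hsum
  rw [PhiRho, hstep1]
  have hL : (∫ s in Iic x, ∫ t in Iic y, phiRho ρ s t)
      = (∫ s in Iic x, phi s) - ∫ s in Iic x, Fgt s := by
    rw [← integral_sub integrable_phi.integrableOn hFgt_int.integrableOn]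
    exact setIntegral_congr_fun measurableSet_Iic fun s _ => hsplit s
  rw [hL]
  have hPx : (∫ s in Iic x, phi s) = Phi x := rfl
  linarith

end Rho

theorem stmt_6 (β b₁ b₂ b₁₂ : ℝ) (hβ : β ∈ Set.Icc (-1 : ℝ) 1)
    (h1 : b₁ ∈ Set.Ioo (-1 : ℝ) 1) (h2 : b₂ ∈ Set.Ioo (-1 : ℝ) 1)
    (hρ : rho2 b₁ b₂ b₁₂ ∈ Set.Ioo (-1 : ℝ) 1) :
    fBeta β b₁ b₂ b₁₂ = fBeta β (-b₁) (-b₂) b₁₂ := by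
  obtain ⟨hβ1, hβ2⟩ := hβ
  obtain ⟨h1a, h1b⟩ := h1
  obtain ⟨h2a, h2b⟩ := h2
  have hρ2 : (rho2 b₁ b₂ b₁₂) ^ 2 < 1 := by nlinarith [hρ.1, hρ.2]
  have hrhoeq : rho2 (-b₁) (-b₂) b₁₂ = rho2 b₁ b₂ b₁₂ := by
    simp [rho2, neg_mul_neg]
  have hβabs : |β| ≤ 1 := abs_le.2 ⟨hβ1, hβ2⟩
  have hb1 : |β * b₁| < 1 := by
    rw [abs_mul]
    calc |β| * |b₁| ≤ 1 * |b₁| := mul_le_mul_of_nonneg_right hβabs (abs_nonneg _)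
      _ = |b₁| := one_mul _
      _ < 1 := abs_lt.2 ⟨h1a, h1b⟩
  have hb2 : |β * b₂| < 1 := by
    rw [abs_mul]
    calc |β| * |b₂| ≤ 1 * |b₂| := mul_le_mul_of_nonneg_right hβabs (abs_nonneg _)
      _ = |b₂| := one_mul _
      _ < 1 := abs_lt.2 ⟨h2a, h2b⟩
  obtain ⟨hb1a, hb1b⟩ := abs_lt.1 hb1
  obtain ⟨hb2a, hb2b⟩ := abs_lt.1 hb2
  have hp10 : 0 < (1 + β * b₁) / 2 := by linarith
  have hp11 : (1 + β * b₁) / 2 < 1 := by linarith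
  have hp20 : 0 < (1 + β * b₂) / 2 := by linarith
  have hp21 : (1 + β * b₂) / 2 < 1 := by linarith
  have hnegx : PhiInv ((1 + β * -b₁) / 2) = - PhiInv ((1 + β * b₁) / 2) := by
    have he : (1 + β * -b₁) / 2 = 1 - (1 + β * b₁) / 2 := by ring
    rw [he, PhiInv_one_sub hp10 hp11]
  have hnegy : PhiInv ((1 + β * -b₂) / 2) = - PhiInv ((1 + β * b₂) / 2) := by
    have he : (1 + β * -b₂) / 2 = 1 - (1 + β * b₂) / 2 := by ring
    rw [he, PhiInv_one_sub hp20 hp21]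
  have key := PhiRho_key hρ2 (PhiInv ((1 + β * b₁) / 2)) (PhiInv ((1 + β * b₂) / 2))
  rw [Phi_PhiInv hp10 hp11, Phi_PhiInv hp20 hp21] at key
  unfold fBeta Prob6
  rw [hrhoeq, hnegx, hnegy]
  linarith
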